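/- Numerical classification underlying the classification of Sarkisov links of type II between del Pezzo surfaces of Picard rank 1: Let K, a, b, m be integers with K ∈ {2,3,4,5,6,8,9}, 1 ≤ a ≤ K − 1, 1 ≤ b, K − a + b ≤ 9, and m ≥ 1. Then a(a−K)m² + 2abm + b(b+K) = 0 holds if and only if (K,a,b,m) is one of the following 28 tuples: (9,2,1,1), (9,3,3,2), (9,5,1,1), (9,6,6,5), (9,7,7,8), (9,8,8,17), (8,1,2,2), (8,3,1,1), (8,4,4,3), (8,5,2,2), (8,6,6,7), (8,7,7,15), (6,1,3,3), (6,2,2,2), (6,3,3,3), (6,4,4,5), (6,5,5,11), (5,1,5,5), (5,2,5,5), (5,3,3,4), (5,4,4,9), (4,2,2,3), (4,3,3,7), (3,1,1,2), (3,2,2,5), (3,1,6,9), (2,1,1,3), (2,1,8,20). -/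
import Mathlib


set_option maxHeartbeats 4000000 in
/-- Numerical classification underlying the classification of Sarkisov links of type II between
del Pezzo surfaces of Picard rank 1: for integers `K ∈ {2,3,4,5,6,8,9}`, `1 ≤ a ≤ K − 1`,
`1 ≤ b`, `K − a + b ≤ 9` and `m ≥ 1`, the equation `a(a−K)m² + 2abm + b(b+K) = 0` holds exactly
for the 28 listed tuples `(K,a,b,m)`. -/
theorem sarkisov_linkII_numerical_classification (K a b m : ℤ)
    (hK : K = 2 ∨ K = 3 ∨ K = 4 ∨ K = 5 ∨ K = 6 ∨ K = 8 ∨ K = 9)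
    (ha₁ : 1 ≤ a) (ha₂ : a ≤ K - 1) (hb : 1 ≤ b) (hdeg : K - a + b ≤ 9) (hm : 1 ≤ m) :
    a * (a - K) * m ^ 2 + 2 * a * b * m + b * (b + K) = 0 ↔
      (K, a, b, m) ∈ ({(9, 2, 1, 1), (9, 3, 3, 2), (9, 5, 1, 1), (9, 6, 6, 5), (9, 7, 7, 8),
        (9, 8, 8, 17), (8, 1, 2, 2), (8, 3, 1, 1), (8, 4, 4, 3), (8, 5, 2, 2), (8, 6, 6, 7),
        (8, 7, 7, 15), (6, 1, 3, 3), (6, 2, 2, 2), (6, 3, 3, 3), (6, 4, 4, 5), (6, 5, 5, 11),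
        (5, 1, 5, 5), (5, 2, 5, 5), (5, 3, 3, 4), (5, 4, 4, 9), (4, 2, 2, 3), (4, 3, 3, 7),
        (3, 1, 1, 2), (3, 2, 2, 5), (3, 1, 6, 9), (2, 1, 1, 3), (2, 1, 8, 20)} :
        Set (ℤ × ℤ × ℤ × ℤ)) := by
  constructor
  · intro h
    have h' : a * (a - K) * (m * m) + 2 * a * b * m + b * (b + K) = 0 := by
      rw [← pow_two]; linarith
    clear h
    have hK2 : 2 ≤ K := by rcases hK with rfl | rfl | rfl | rfl | rfl | rfl | rfl <;> omega
    have hbK : (0:ℤ) ≤ b * (b + K) := by positivity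
    have hm3 : a * (K - a) * m ≤ 2 * a * b + b * (b + K) := by
      nlinarith [h', hm, mul_nonneg hbK (by linarith : (0:ℤ) ≤ m - 1)]
    have hKa : 1 ≤ a * (K - a) := by nlinarith [ha₁, ha₂]
    have hm5 : m ≤ (2 * a * b + b * (b + K)) / (a * (K - a)) := by
      rw [Int.le_ediv_iff_mul_le (by linarith : (0:ℤ) < a * (K - a))]
      linarith [hm3]
    clear hm3 hKa hbK
    have hb2 : b ≤ 9 - K + a := by omega
    simp only [Set.mem_insert_iff, Set.mem_singleton_iff, Prod.mk.injEq]
    rcases hK with rfl | rfl | rfl | rfl | rfl | rfl | rfl <;>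
      interval_cases a <;> interval_cases b <;> norm_num <;> interval_cases m <;> omega
  · intro hmem
    simp only [Set.mem_insert_iff, Set.mem_singleton_iff, Prod.mk.injEq] at hmem
    rcases hmem with ⟨rfl, rfl, rfl, rfl⟩ | ⟨rfl, rfl, rfl, rfl⟩ | ⟨rfl, rfl, rfl, rfl⟩ | ⟨rfl, rfl, rfl, rfl⟩ | ⟨rfl, rfl, rfl, rfl⟩ | ⟨rfl, rfl, rfl, rfl⟩ | ⟨rfl, rfl, rfl, rfl⟩ | ⟨rfl, rfl, rfl, rfl⟩ | ⟨rfl, rfl, rfl, rfl⟩ | ⟨rfl, rfl, rfl, rfl⟩ | ⟨rfl, rfl, rfl, rfl⟩ | ⟨rfl, rfl, rfl, rfl⟩ | ⟨rfl, rfl, rfl, rfl⟩ | ⟨rfl, rfl, rfl, rfl⟩ | ⟨rfl, rfl, rfl, rfl⟩ | ⟨rfl, rfl, rfl, rfl⟩ | ⟨rfl, rfl, rfl, rfl⟩ | ⟨rfl, rfl, rfl, rfl⟩ | ⟨rfl, rfl, rfl, rfl⟩ | ⟨rfl, rfl, rfl, rfl⟩ | ⟨rfl, rfl, rfl, rfl⟩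 | ⟨rfl, rfl, rfl, rfl⟩ | ⟨rfl, rfl, rfl, rfl⟩ | ⟨rfl, rfl, rfl, rfl⟩ | ⟨rfl, rfl, rfl, rfl⟩ | ⟨rfl, rfl, rfl, rfl⟩ | ⟨rfl, rfl, rfl, rfl⟩ | ⟨rfl, rfl, rfl, rfl⟩ <;> norm_num
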